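/- For the choice P̃ = θI (θ > 0) and Λ diagonal with diagonal entries −σ_k < 0, the ratio λ_min(Q̃)/λ_max(P̃) with Q̃ = −(ΛᵀP̃ + P̃Λ) is maximal over all symmetric positive definite P, Q solving ΛᵀP + PΛ = −Q; specifically, for any such pair, λ_min(Q)/λ_max(P) ≤ 2 min_k σ_k. -/

import Mathlib

open Matrix

lemma row_sq_sum {n : ℕ} (A : Matrix (Fin n) (Fin n) ℝ) (hA : A.IsHermitian) (k : Fin n) :
    ∑ j, ((hA.eigenvectorUnitary : Matrix (Fin n) (Fin n) ℝ) k j) ^ 2 = 1 := by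
  have h := (Matrix.mem_unitaryGroup_iff.mp hA.eigenvectorUnitary.2)
  have := congrArg (fun M => M k k) h
  simpa [Matrix.mul_apply, Matrix.one_apply, pow_two] using this

lemma diag_eq_sum {n : ℕ} (A : Matrix (Fin n) (Fin n) ℝ) (hA : A.IsHermitian) (k : Fin n) :
    A k k = ∑ j, hA.eigenvalues j *
      ((hA.eigenvectorUnitary : Matrix (Fin n) (Fin n) ℝ) k j) ^ 2 := by
  conv_lhs => rw [hA.spectral_theorem, Unitary.conjStarAlgAut_apply]
  simp only [Matrix.mul_apply, Matrix.diagonal_apply, Function.comp_apply, mul_ite, mul_zero,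
    Finset.sum_ite_eq', Finset.mem_univ, if_true, Matrix.star_apply, star_trivial]
  apply Finset.sum_congr rfl
  intro j _
  rw [RCLike.ofReal_real_eq_id]
  simp; ring

lemma inf_le_diag {n : ℕ} (hn : 0 < n) (A : Matrix (Fin n) (Fin n) ℝ)
    (hA : A.IsHermitian) (k : Fin n) : (⨅ i, hA.eigenvalues i) ≤ A k k := by
  have : Nonempty (Fin n) := ⟨k⟩
  rw [diag_eq_sum A hA k]
  calc (⨅ i, hA.eigenvalues i)
      = ∑ j, (⨅ i, hA.eigenvalues i) *
        ((hA.eigenvectorUnitary : Matrix (Fin n) (Fin n) ℝ) k j) ^ 2 := by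
        rw [← Finset.mul_sum, row_sq_sum A hA k, mul_one]
    _ ≤ _ := by
        apply Finset.sum_le_sum
        intro j _
        exact mul_le_mul_of_nonneg_right (ciInf_le (Set.Finite.bddBelow (Set.finite_range _)) j)
          (sq_nonneg _)

lemma diag_le_sup {n : ℕ} (hn : 0 < n) (A : Matrix (Fin n) (Fin n) ℝ)
    (hA : A.IsHermitian) (k : Fin n) : A k k ≤ ⨆ i, hA.eigenvalues i := by
  have : Nonempty (Fin n) := ⟨k⟩
  rw [diag_eq_sum A hA k]
  calc ∑ j, hA.eigenvalues j * ((hA.eigenvectorUnitary : Matrix (Fin n) (Fin n) ℝ) k j) ^ 2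
      ≤ ∑ j, (⨆ i, hA.eigenvalues i) *
        ((hA.eigenvectorUnitary : Matrix (Fin n) (Fin n) ℝ) k j) ^ 2 := by
        apply Finset.sum_le_sum
        intro j _
        exact mul_le_mul_of_nonneg_right (le_ciSup (Set.Finite.bddAbove (Set.finite_range _)) j)
          (sq_nonneg _)
    _ = ⨆ i, hA.eigenvalues i := by rw [← Finset.mul_sum, row_sq_sum A hA k, mul_one]

/-- For `Λ = diag(-σ₁,…,…σₙ)` with `σ_k > 0`, any symmetric positive definite
pair `P, Q` solving `Λᵀ P + P Λ = -Q` satisfies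
`λ_min(Q)/λ_max(P) ≤ 2 min_k σ_k`, so the choice `P = θ I` is optimal. -/
theorem ratio_le_two_sigma_min {n : ℕ} (hn : 0 < n)
    (σ : Fin n → ℝ) (hσ : ∀ k, 0 < σ k)
    (P Q : Matrix (Fin n) (Fin n) ℝ)
    (hP : P.PosDef) (hQ : Q.PosDef)
    (hLyap : (Matrix.diagonal (fun k => -σ k))ᵀ * P + P * Matrix.diagonal (fun k => -σ k) = -Q) :
    (⨅ k, hQ.1.eigenvalues k) / (⨆ k, hP.1.eigenvalues k) ≤ 2 * ⨅ k, σ k := by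
  have : Nonempty (Fin n) := ⟨⟨0, hn⟩⟩
  obtain ⟨k, hk⟩ := exists_eq_ciInf_of_finite (f := σ)
  -- Q k k = 2 * σ k * P k k
  have hQkk : Q k k = 2 * σ k * P k k := by
    have := congrArg (fun M => M k k) hLyap
    simp only [Matrix.add_apply, Matrix.neg_apply, Matrix.transpose_apply] at this
    have h1 : ((Matrix.diagonal (fun k => -σ k))ᵀ * P) k k = -σ k * P k k := by
      simp [Matrix.diagonal_transpose, Matrix.diagonal_mul]
    have h2 : (P * Matrix.diagonal (fun k => -σ k)) k k = P k k * (-σ k) := by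
      simp [Matrix.mul_diagonal]
    have := congrArg (fun M => M k k) hLyap
    simp only [Matrix.add_apply, Matrix.neg_apply] at this
    rw [h1, h2] at this
    linarith
  have hPmax : 0 < ⨆ i, hP.1.eigenvalues i := by
    calc (0:ℝ) < hP.1.eigenvalues k := hP.eigenvalues_pos k
      _ ≤ _ := le_ciSup (Set.Finite.bddAbove (Set.finite_range _)) k
  rw [div_le_iff₀ hPmax]
  calc (⨅ i, hQ.1.eigenvalues i) ≤ Q k k := inf_le_diag hn Q hQ.1 k
    _ = 2 * σ k * P k k := hQkk
    _ ≤ 2 * σ k * (⨆ i, hP.1.eigenvalues i) := by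
        apply mul_le_mul_of_nonneg_left (diag_le_sup hn P hP.1 k)
        linarith [hσ k]
    _ = 2 * (⨅ i, σ i) * (⨆ i, hP.1.eigenvalues i) := by rw [hk]
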